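/- The symmetric group S(Ω) on an infinite set Ω has no minimal generating set; that is, for every subset S ⊆ S(Ω) that generates S(Ω), there exists a proper subset of S that still generates S(Ω). -/

import Mathlib

set_option linter.unusedSectionVars false

open Equiv Set Subgroup Cardinal

namespace NMGS

variable {γ : Type*}

/-- Shift in the `ℤ` coordinate. -/
def zshift (γ : Type*) : Equiv.Perm (ℤ × γ) where
  toFun p := (p.1 + 1, p.2)
  invFun p := (p.1 - 1, p.2)
  left_inv p := by simp
  right_inv p := by simp

/-- Reflection about 0. -/
def refl0 (γ : Type*) : Equiv.Perm (ℤ × γ) where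
  toFun p := (-p.1, p.2)
  invFun p := (-p.1, p.2)
  left_inv p := by simp
  right_inv p := by simp

/-- Reflection about 1/2. -/
def refl1 (γ : Type*) : Equiv.Perm (ℤ × γ) where
  toFun p := (1 - p.1, p.2)
  invFun p := (1 - p.1, p.2)
  left_inv p := by simp
  right_inv p := by simp

@[simp] lemma zshift_apply (p : ℤ × γ) : zshift γ p = (p.1 + 1, p.2) := rfl
@[simp] lemma zshift_inv_apply (p : ℤ × γ) : (zshift γ)⁻¹ p = (p.1 - 1, p.2) := rfl
@[simp] lemma refl0_apply (p : ℤ × γ) : refl0 γ p = (-p.1, p.2) := rfl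
@[simp] lemma refl1_apply (p : ℤ × γ) : refl1 γ p = (1 - p.1, p.2) := rfl

lemma zshift_eq_word : zshift γ = refl1 γ * refl0 γ := by
  refine Equiv.ext fun p => ?_
  simp [Equiv.Perm.mul_apply]
  ring

/-- Twist by powers of `u` depending on the level. -/
def theta (u : Equiv.Perm γ) : Equiv.Perm (ℤ × γ) where
  toFun p := (p.1, (u ^ (max p.1 0)) p.2)
  invFun p := (p.1, ((u ^ (max p.1 0))⁻¹) p.2)
  left_inv p := by simp
  right_inv p := by simp

@[simp] lemma theta_apply (u : Equiv.Perm γ) (p : ℤ × γ) :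
    theta u p = (p.1, (u ^ (max p.1 0)) p.2) := rfl
@[simp] lemma theta_inv_apply (u : Equiv.Perm γ) (p : ℤ × γ) :
    (theta u)⁻¹ p = (p.1, ((u ^ (max p.1 0))⁻¹) p.2) := rfl

/-- `x` acting on level 0 only. -/
def lvl0fun (x : Equiv.Perm γ) : Equiv.Perm (ℤ × γ) where
  toFun p := (p.1, if p.1 = 0 then x p.2 else p.2)
  invFun p := (p.1, if p.1 = 0 then x⁻¹ p.2 else p.2)
  left_inv p := by rcases p with ⟨k, y⟩; by_cases h : k = 0 <;> simp [h]
  right_inv p := by rcases p with ⟨k, y⟩; by_cases h : k = 0 <;> simp [h]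

@[simp] lemma lvl0fun_apply (x : Equiv.Perm γ) (p : ℤ × γ) :
    lvl0fun x p = (p.1, if p.1 = 0 then x p.2 else p.2) := rfl

lemma lvl0fun_one : lvl0fun (1 : Equiv.Perm γ) = 1 := by
  refine Equiv.ext fun p => ?_
  simp

lemma lvl0fun_mul (x y : Equiv.Perm γ) : lvl0fun (x * y) = lvl0fun x * lvl0fun y := by
  refine Equiv.ext fun p => ?_
  rcases p with ⟨k, z⟩
  by_cases h : k = 0 <;> simp [Equiv.Perm.mul_apply, h]

/-- The level-0 embedding as a monoid hom. -/
def lvl0 (γ : Type*) : Equiv.Perm γ →* Equiv.Perm (ℤ × γ) where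
  toFun := lvl0fun
  map_one' := lvl0fun_one
  map_mul' := lvl0fun_mul

lemma pow_collapse (u : Equiv.Perm γ) (a b c d : ℤ) (y : γ) :
    (u ^ a) ((u ^ b)⁻¹ ((u ^ c) ((u ^ d)⁻¹ y))) = (u ^ (a - b + c - d)) y := by
  have : u ^ (a - b + c - d) = u ^ a * (u ^ b)⁻¹ * (u ^ c) * (u ^ d)⁻¹ := by
    rw [zpow_sub, zpow_add, zpow_sub]
  rw [this]
  simp [Equiv.Perm.mul_apply]

/-- KEY WORD IDENTITY: the level-0 copy of `u` is a word in `zshift` and `theta u`. -/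
lemma lvl0_eq_word (u : Equiv.Perm γ) :
    lvl0 γ u =
      (zshift γ)⁻¹ * theta u * zshift γ * (theta u)⁻¹ * zshift γ * theta u *
        (zshift γ)⁻¹ * (theta u)⁻¹ := by
  refine Equiv.ext fun p => ?_
  rcases p with ⟨k, y⟩
  show ((k:ℤ), if k = 0 then u y else y) = _
  simp only [Equiv.Perm.mul_apply, zshift_apply, zshift_inv_apply, theta_apply, theta_inv_apply]
  have e1 : k - 1 + 1 = k := by ring
  rw [e1]
  have e3 : k + 1 - 1 = k := by ring
  rw [e3]
  rw [pow_collapse]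
  have harith : max (k + 1) 0 - max k 0 + (max (k - 1) 0 - max k 0) = if k = 0 then 1 else 0 := by
    rcases lt_trichotomy k 0 with h | h | h
    · rw [max_eq_right (by omega : (k:ℤ) + 1 ≤ 0), max_eq_right (by omega : (k:ℤ) ≤ 0),
        max_eq_right (by omega : (k:ℤ) - 1 ≤ 0), if_neg (by omega)]
      ring
    · subst h; norm_num
    · rw [max_eq_left (by omega : (0:ℤ) ≤ k + 1), max_eq_left (by omega : (0:ℤ) ≤ k),
        max_eq_left (by omega : (0:ℤ) ≤ k - 1), if_neg (by omega)]
      ring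
  have harith' : max (k + 1) 0 - max k 0 + max (k - 1) 0 - max k 0 = if k = 0 then 1 else 0 := by
    rw [← harith]; ring
  rw [harith']
  split_ifs with h
  · subst h; simp
  · simp



/-- The supply stack: `v n` acting on level `n`, for `n ≥ 0`. -/
def stack (v : ℕ → Equiv.Perm γ) : Equiv.Perm (ℤ × γ) where
  toFun p := (p.1, if 0 ≤ p.1 then v p.1.toNat p.2 else p.2)
  invFun p := (p.1, if 0 ≤ p.1 then (v p.1.toNat)⁻¹ p.2 else p.2)
  left_inv p := by rcases p with ⟨k, y⟩; by_cases h : 0 ≤ k <;> simp [h]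
  right_inv p := by rcases p with ⟨k, y⟩; by_cases h : 0 ≤ k <;> simp [h]

@[simp] lemma stack_apply (v : ℕ → Equiv.Perm γ) (p : ℤ × γ) :
    stack v p = (p.1, if 0 ≤ p.1 then v p.1.toNat p.2 else p.2) := rfl
@[simp] lemma stack_inv_apply (v : ℕ → Equiv.Perm γ) (p : ℤ × γ) :
    (stack v)⁻¹ p = (p.1, if 0 ≤ p.1 then (v p.1.toNat)⁻¹ p.2 else p.2) := rfl

lemma zshift_zpow (n : ℤ) (p : ℤ × γ) : (zshift γ ^ n) p = (p.1 + n, p.2) := by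
  induction n using Int.induction_on generalizing p with
  | zero => simp
  | succ n ih =>
      rw [zpow_add_one]
      rcases p with ⟨k, y⟩
      rw [Equiv.Perm.mul_apply, zshift_apply, ih]
      simp; ring
  | pred n ih =>
      rw [zpow_sub_one]
      rcases p with ⟨k, y⟩
      rw [Equiv.Perm.mul_apply, zshift_inv_apply, ih]
      simp; ring

lemma zshift_zpow_inv (n : ℤ) (p : ℤ × γ) : (zshift γ ^ n)⁻¹ p = (p.1 - n, p.2) := by
  rw [← zpow_neg, zshift_zpow]; simp; ring

/-- Conjugating a level-0 permutation by a shifted stack conjugates by the supply element. -/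
lemma stack_conj (v : ℕ → Equiv.Perm γ) (n : ℕ) (x : Equiv.Perm γ) :
    ((zshift γ ^ (n : ℤ))⁻¹ * stack v * zshift γ ^ (n : ℤ)) * lvl0fun x *
      ((zshift γ ^ (n : ℤ))⁻¹ * stack v * zshift γ ^ (n : ℤ))⁻¹ =
      lvl0fun (v n * x * (v n)⁻¹) := by
  refine Equiv.ext fun p => ?_
  rcases p with ⟨k, y⟩
  simp only [mul_inv_rev, inv_inv, Equiv.Perm.mul_apply, zshift_zpow, zshift_zpow_inv,
    stack_apply, stack_inv_apply, lvl0fun_apply]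
  by_cases hk : k = 0
  · subst hk
    have h1 : (0:ℤ) + n = n := by ring
    simp [h1, Equiv.Perm.mul_apply]
  · have h2 : ¬ (k + n - n = 0) := by omega
    by_cases h3 : 0 ≤ k + n
    · simp [h2, h3, hk]
    · simp [h2, h3, hk]


/-- Conjugation by an equivalence, as a monoid hom on permutation groups. -/
def conjHom {α β : Type*} (e : α ≃ β) : Equiv.Perm α →* Equiv.Perm β where
  toFun σ := e.symm.trans (σ.trans e)
  map_one' := by ext b; simp
  map_mul' σ τ := by ext b; simp [Equiv.Perm.mul_apply]

@[simp] lemma conjHom_apply {α β : Type*} (e : α ≃ β) (σ : Equiv.Perm α) (b : β) :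
    conjHom e σ b = e (σ (e.symm b)) := rfl

/-- Assembling `γ ⊕ ((ℤ \ {0}) × γ)` into `ℤ × γ`. -/
def assemble (γ : Type*) : γ ⊕ ({k : ℤ // k ≠ 0} × γ) ≃ ℤ × γ where
  toFun x := Sum.rec (fun y => ((0 : ℤ), y)) (fun q => (q.1.1, q.2)) x
  invFun p := if h : p.1 = 0 then Sum.inl p.2 else Sum.inr (⟨p.1, h⟩, p.2)
  left_inv := by
    rintro (y | ⟨⟨k, hk⟩, y⟩)
    · simp
    · simp [hk]
  right_inv := by rintro ⟨k, y⟩; by_cases h : k = 0 <;> simp [h]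

instance : Infinite {k : ℤ // k ≠ 0} :=
  Infinite.of_injective (fun n : ℕ => ⟨(n : ℤ) + 1, by omega⟩)
    (by intro a b h; simp [Subtype.ext_iff] at h; omega)

lemma card_nat_prod (X : Type u) [Infinite X] : #(ℕ × X) = #X := by
  rw [Cardinal.mk_prod, Cardinal.mk_nat, Cardinal.lift_aleph0, Cardinal.lift_uzero,
    Cardinal.mul_eq_max le_rfl (Cardinal.aleph0_le_mk X),
    max_eq_right (Cardinal.aleph0_le_mk X)]

lemma card_nz_prod (X : Type u) [Infinite X] : #({k : ℤ // k ≠ 0} × X) = #X := by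
  letI : Denumerable {k : ℤ // k ≠ 0} := Denumerable.ofEncodableOfInfinite _
  have e : ({k : ℤ // k ≠ 0} × X) ≃ (ℕ × X) :=
    Equiv.prodCongr (Denumerable.eqv _) (Equiv.refl X)
  rw [Cardinal.mk_congr e, card_nat_prod]

variable {Ω : Type*} [Infinite Ω]

lemma infinite_coe_of_mk {W : Set Ω} (h : #↥W = #Ω) : Infinite ↥W := by
  rw [Cardinal.infinite_iff, h]
  exact Cardinal.aleph0_le_mk Ω

lemma not_mem_invariant {W : Set Ω} (t : Equiv.Perm Ω) (ht : ∀ x ∈ W, t x = x)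
    {x : Ω} (hx : x ∉ W) : t x ∉ W := by
  intro hW
  have h1 : t (t x) = t x := ht _ hW
  have h2 : t x = x := t.injective h1
  rw [h2] at hW
  exact hx hW

lemma mem_iff_invariant {W : Set Ω} (t : Equiv.Perm Ω) (ht : ∀ x ∈ W, t x = x) (x : Ω) :
    x ∈ (Wᶜ : Set Ω) ↔ t x ∈ (Wᶜ : Set Ω) := by
  constructor
  · exact fun hx => not_mem_invariant t ht hx
  · intro hx
    by_contra hxW
    simp only [mem_compl_iff, not_not] at hxW
    exact hx (by rw [ht x hxW]; exact hxW)

/-- The restriction of a permutation fixing `W` pointwise to `Wᶜ`. -/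
def restrictPerm (W : Set Ω) (t : Equiv.Perm Ω) (ht : ∀ x ∈ W, t x = x) :
    Equiv.Perm ↥(Wᶜ) :=
  t.subtypePerm (fun x => (mem_iff_invariant t ht x).symm)

@[simp] lemma restrictPerm_apply (W : Set Ω) (t : Equiv.Perm Ω) (ht : ∀ x ∈ W, t x = x)
    (x : ↥(Wᶜ)) : (restrictPerm W t ht x : Ω) = t ↑x := rfl

section adapted

variable (W : Set Ω)

open scoped Classical in
/-- The big adapted equivalence `Ω ≃ ℤ × Ω`, level 0 being `Wᶜ` together with a copy of `W`. -/
noncomputable def bigE (sw : ↥W ≃ ↥W ⊕ ({k : ℤ // k ≠ 0} × Ω)) : Ω ≃ ℤ × Ω :=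
  ((Equiv.Set.sumCompl W).symm.trans (Equiv.sumComm _ _)).trans <|
    ((Equiv.refl ↥(Wᶜ)).sumCongr sw).trans <|
      (Equiv.sumAssoc _ _ _).symm.trans <|
        (((Equiv.sumComm _ _).trans (Equiv.Set.sumCompl W)).sumCongr
          (Equiv.refl ({k : ℤ // k ≠ 0} × Ω))).trans <| assemble Ω

lemma bigE_apply_notmem (sw : ↥W ≃ ↥W ⊕ ({k : ℤ // k ≠ 0} × Ω)) {x : Ω} (hx : x ∉ W) :
    bigE W sw x = ((0 : ℤ), x) := by
  classical
  simp [bigE, Equiv.Set.sumCompl_symm_apply_of_notMem hx, assemble]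

lemma bigE_apply_mem_inl (sw : ↥W ≃ ↥W ⊕ ({k : ℤ // k ≠ 0} × Ω)) {x : Ω} (hx : x ∈ W)
    {w' : ↥W} (h : sw ⟨x, hx⟩ = Sum.inl w') : bigE W sw x = ((0 : ℤ), (w' : Ω)) := by
  classical
  simp [bigE, Equiv.Set.sumCompl_symm_apply_of_mem hx, h, assemble]

lemma bigE_apply_mem_inr (sw : ↥W ≃ ↥W ⊕ ({k : ℤ // k ≠ 0} × Ω)) {x : Ω} (hx : x ∈ W)
    {q : {k : ℤ // k ≠ 0} × Ω} (h : sw ⟨x, hx⟩ = Sum.inr q) :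
    bigE W sw x = (q.1.1, q.2) := by
  classical
  simp [bigE, Equiv.Set.sumCompl_symm_apply_of_mem hx, h, assemble]

/-- The small adapted equivalence `Ω ≃ ℤ × ↥Wᶜ`, with `Wᶜ` sitting at level 0. -/
noncomputable def smallE (ew : ↥W ≃ ({k : ℤ // k ≠ 0} × ↥(Wᶜ))) : Ω ≃ ℤ × ↥(Wᶜ) := by
  classical
  exact ((Equiv.Set.sumCompl W).symm.trans (Equiv.sumComm _ _)).trans <|
    ((Equiv.refl ↥(Wᶜ)).sumCongr ew).trans (assemble ↥(Wᶜ))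

lemma smallE_apply_notmem (ew : ↥W ≃ ({k : ℤ // k ≠ 0} × ↥(Wᶜ))) {x : Ω} (hx : x ∉ W) :
    smallE W ew x = ((0 : ℤ), (⟨x, hx⟩ : ↥(Wᶜ))) := by
  classical
  simp [smallE, Equiv.Set.sumCompl_symm_apply_of_notMem hx, assemble]

lemma smallE_apply_mem (ew : ↥W ≃ ({k : ℤ // k ≠ 0} × ↥(Wᶜ))) {x : Ω} (hx : x ∈ W) :
    smallE W ew x = ((ew ⟨x, hx⟩).1.1, (ew ⟨x, hx⟩).2) := by
  classical
  simp [smallE, Equiv.Set.sumCompl_symm_apply_of_mem hx, assemble]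

end adapted


section wandsec

variable {Ω : Type*} [Infinite Ω]

lemma bigE_adapt (W : Set Ω) (sw : ↥W ≃ ↥W ⊕ ({k : ℤ // k ≠ 0} × Ω))
    (t : Equiv.Perm Ω) (ht : ∀ x ∈ W, t x = x) :
    conjHom (bigE W sw).symm (lvl0fun t) = t := by
  refine Equiv.ext fun x => ?_
  have key : lvl0fun t (bigE W sw x) = bigE W sw (t x) := by
    by_cases hx : x ∈ W
    · have htx : t x = x := ht x hx
      rcases h : sw ⟨x, hx⟩ with w' | q
      · rw [bigE_apply_mem_inl W sw hx h, htx, bigE_apply_mem_inl W sw hx h]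
        simp [ht _ w'.2]
      · rw [bigE_apply_mem_inr W sw hx h, htx, bigE_apply_mem_inr W sw hx h]
        simp [q.1.2]
    · rw [bigE_apply_notmem W sw hx, bigE_apply_notmem W sw (not_mem_invariant t ht hx)]
      simp
  show (bigE W sw).symm (lvl0fun t ((bigE W sw).symm.symm x)) = t x
  rw [Equiv.symm_symm, key, Equiv.symm_apply_apply]

lemma smallE_transport (W : Set Ω) (ew : ↥W ≃ ({k : ℤ // k ≠ 0} × ↥(Wᶜ)))
    (t : Equiv.Perm Ω) (ht : ∀ x ∈ W, t x = x) :
    conjHom (smallE W ew).symm (lvl0fun (restrictPerm W t ht)) = t := by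
  refine Equiv.ext fun x => ?_
  have key : lvl0fun (restrictPerm W t ht) (smallE W ew x) = smallE W ew (t x) := by
    by_cases hx : x ∈ W
    · rw [smallE_apply_mem W ew hx, ht x hx, smallE_apply_mem W ew hx]
      simp [(ew ⟨x, hx⟩).1.2]
    · rw [smallE_apply_notmem W ew hx, smallE_apply_notmem W ew (not_mem_invariant t ht hx)]
      simp only [lvl0fun_apply, if_pos rfl]
      exact Prod.ext rfl (Subtype.ext rfl)
  show (smallE W ew).symm (lvl0fun _ ((smallE W ew).symm.symm x)) = t x
  rw [Equiv.symm_symm, key, Equiv.symm_apply_apply]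

/-- THE WAND: any countable family of permutations fixing `W` pointwise lies in the
closure of four permutations. -/
theorem wand (W : Set Ω) (hW : #↥W = #Ω) (hWc : #↥(Wᶜ) = #Ω)
    (t : ℕ → Equiv.Perm Ω) (ht : ∀ n, ∀ x ∈ W, t n x = x) :
    ∃ a b c d : Equiv.Perm Ω,
      ∀ n, t n ∈ Subgroup.closure {a, b, c, d} := by
  haveI : Infinite ↥W := infinite_coe_of_mk hW
  haveI : Infinite ↥(Wᶜ) := infinite_coe_of_mk hWc
  obtain ⟨ew⟩ : Nonempty (↥W ≃ ({k : ℤ // k ≠ 0} × ↥(Wᶜ))) := by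
    refine Cardinal.eq.mp ?_
    rw [hW, card_nz_prod ↥(Wᶜ), hWc]
  obtain ⟨sw⟩ : Nonempty (↥W ≃ ↥W ⊕ ({k : ℤ // k ≠ 0} × Ω)) := by
    refine Cardinal.eq.mp ?_
    rw [Cardinal.mk_sum, card_nz_prod Ω, Cardinal.lift_id, Cardinal.lift_id, hW,
      Cardinal.add_eq_self (Cardinal.aleph0_le_mk Ω)]
  set E0 := smallE W ew with hE0
  set E := bigE W sw with hE
  set u : ℕ → Equiv.Perm ↥(Wᶜ) := fun n => restrictPerm W (t n) (ht n) with hu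
  set ι₁ : Equiv.Perm Ω := conjHom E0.symm (refl0 ↥(Wᶜ)) with hι₁
  set ι₂ : Equiv.Perm Ω := conjHom E0.symm (refl1 ↥(Wᶜ)) with hι₂
  set shat : Equiv.Perm Ω := conjHom E0.symm (zshift ↥(Wᶜ)) with hshatdef
  set θf : ℕ → Equiv.Perm Ω := fun n => conjHom E0.symm (theta (u n)) with hθf
  set c0 : Equiv.Perm Ω →* Equiv.Perm Ω := (conjHom E.symm).comp (lvl0 Ω) with hc0
  set δ : Equiv.Perm Ω := conjHom E.symm (zshift Ω) with hδ
  set V : Equiv.Perm Ω := conjHom E.symm (stack θf) with hV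
  refine ⟨δ, V, c0 ι₁, c0 ι₂, fun n => ?_⟩
  set G : Subgroup (Equiv.Perm Ω) := Subgroup.closure {δ, V, c0 ι₁, c0 ι₂} with hG
  set Y : Subgroup (Equiv.Perm Ω) := G.comap c0 with hY
  -- conjugation stability of Y
  have hAn : ∀ (m : ℕ) (x : Equiv.Perm Ω), x ∈ Y → θf m * x * (θf m)⁻¹ ∈ Y := by
    intro m x hx
    have hδG : δ ∈ G := subset_closure (by simp)
    have hVG : V ∈ G := subset_closure (by simp)
    have hA : (δ ^ (m : ℤ))⁻¹ * V * δ ^ (m : ℤ) ∈ G :=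
      mul_mem (mul_mem (inv_mem (zpow_mem hδG _)) hVG) (zpow_mem hδG _)
    have key : c0 (θf m * x * (θf m)⁻¹)
        = ((δ ^ (m : ℤ))⁻¹ * V * δ ^ (m : ℤ)) * c0 x *
            ((δ ^ (m : ℤ))⁻¹ * V * δ ^ (m : ℤ))⁻¹ := by
      have base := stack_conj θf m x
      have mapped := congrArg (conjHom E.symm) base
      simp only [map_mul, map_inv, map_zpow] at mapped
      have hc0x : ∀ z : Equiv.Perm Ω, c0 z = conjHom E.symm (lvl0fun z) := fun z => rfl
      rw [hc0x, hc0x, hδ, hV]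
      exact mapped.symm
    show c0 _ ∈ G
    rw [key]
    exact mul_mem (mul_mem hA hx) (inv_mem hA)
  have hι₁Y : ι₁ ∈ Y := subset_closure (by simp)
  have hι₂Y : ι₂ ∈ Y := subset_closure (by simp)
  have hshatY : shat ∈ Y := by
    have : shat = ι₂ * ι₁ := by
      rw [hshatdef, hι₁, hι₂, ← map_mul, zshift_eq_word]
    rw [this]; exact mul_mem hι₂Y hι₁Y
  have word : t n = shat⁻¹ * (θf n * shat * (θf n)⁻¹) * shat * (θf n * shat⁻¹ * (θf n)⁻¹) := by
    have h1 : t n = conjHom E0.symm (lvl0fun (u n)) := (smallE_transport W ew (t n) (ht n)).symm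
    have h2 : lvl0fun (u n) = (zshift ↥(Wᶜ))⁻¹ * theta (u n) * zshift ↥(Wᶜ) * (theta (u n))⁻¹ *
        zshift ↥(Wᶜ) * theta (u n) * (zshift ↥(Wᶜ))⁻¹ * (theta (u n))⁻¹ := lvl0_eq_word (u n)
    rw [h1, h2]
    simp only [map_mul, map_inv]
    rw [hshatdef, hθf]
    group
  have htY : t n ∈ Y := by
    rw [word]
    exact mul_mem (mul_mem (mul_mem (inv_mem hshatY) (hAn n _ hshatY)) hshatY)
      (hAn n _ (inv_mem hshatY))
  have : c0 (t n) ∈ G := htY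
  rwa [show c0 (t n) = t n from bigE_adapt W sw (t n) (ht n)] at this

end wandsec


section tools

variable {Ω : Type*} [Infinite Ω]

open scoped Classical

/-- Extend a pair of bijections (on a set and on its complement) to a permutation. -/
noncomputable def extPerm {Γ : Type*} (A B : Set Γ) (e : ↥A ≃ ↥B) (e' : ↥(Aᶜ) ≃ ↥(Bᶜ)) :
    Equiv.Perm Γ :=
  (Equiv.Set.sumCompl A).symm.trans ((e.sumCongr e').trans (Equiv.Set.sumCompl B))

lemma extPerm_apply_mem {Γ : Type*} (A B : Set Γ) (e : ↥A ≃ ↥B) (e' : ↥(Aᶜ) ≃ ↥(Bᶜ))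
    {x : Γ} (hx : x ∈ A) : extPerm A B e e' x = ↑(e ⟨x, hx⟩) := by
  simp [extPerm, Equiv.Set.sumCompl_symm_apply_of_mem hx]

lemma extPerm_apply_notmem {Γ : Type*} (A B : Set Γ) (e : ↥A ≃ ↥B) (e' : ↥(Aᶜ) ≃ ↥(Bᶜ))
    {x : Γ} (hx : x ∉ A) : extPerm A B e e' x = ↑(e' ⟨x, hx⟩) := by
  simp [extPerm, Equiv.Set.sumCompl_symm_apply_of_notMem hx]

lemma mk_set_le' (C : Set Ω) : #↥C ≤ #Ω := Cardinal.mk_set_le C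

lemma mk_eq_top_of_subset {B C : Set Ω} (h : B ⊆ C) (hB : #↥B = #Ω) : #↥C = #Ω :=
  le_antisymm (mk_set_le' C) (hB ▸ Cardinal.mk_le_mk_of_subset h)

def sumLeftSubtype (α β : Type*) : {s : α ⊕ β // s.isLeft} ≃ α where
  toFun s := Sum.getLeft s.1 s.2
  invFun a := ⟨Sum.inl a, rfl⟩
  left_inv := by
    rintro ⟨s, h⟩
    cases s with
    | inl a => rfl
    | inr b => simp at h
  right_inv a := rfl

def sumRightSubtype (α β : Type*) : {s : α ⊕ β // s.isRight} ≃ β where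
  toFun s := Sum.getRight s.1 s.2
  invFun b := ⟨Sum.inr b, rfl⟩
  left_inv := by
    rintro ⟨s, h⟩
    cases s with
    | inl a => simp at h
    | inr b => rfl
  right_inv b := rfl

/-- Any set of full cardinality splits into two pieces of full cardinality. -/
lemma split_set (A : Set Ω) (hA : #↥A = #Ω) :
    ∃ V, V ⊆ A ∧ #↥V = #Ω ∧ #↥(A \ V) = #Ω := by
  haveI : Infinite ↥A := infinite_coe_of_mk hA
  obtain ⟨q⟩ : Nonempty (↥A ≃ ↥A ⊕ ↥A) := by
    refine Cardinal.eq.mp ?_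
    have h1 : #(↥A ⊕ ↥A) = #↥A + #↥A := by
      simp [Cardinal.mk_sum]
    rw [h1, Cardinal.add_eq_self (by rw [hA]; exact Cardinal.aleph0_le_mk Ω)]
  set V : Set Ω := Subtype.val '' {a : ↥A | (q a).isLeft} with hV
  have hVsub : V ⊆ A := by rintro x ⟨a, _, rfl⟩; exact a.2
  have hmemV : ∀ (x : Ω) (hx : x ∈ A), (x ∈ V ↔ (q ⟨x, hx⟩).isLeft) := by
    intro x hx
    constructor
    · rintro ⟨a, ha, hval⟩
      have : a = ⟨x, hx⟩ := Subtype.ext hval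
      rwa [this] at ha
    · intro h; exact ⟨⟨x, hx⟩, h, rfl⟩
  have hVcard : #↥V = #Ω := by
    have e1 : ↥V ≃ {a : ↥A | (q a).isLeft} :=
      (Equiv.Set.image _ _ Subtype.val_injective).symm
    have e2 : {a : ↥A | (q a).isLeft} ≃ {s : ↥A ⊕ ↥A // s.isLeft} :=
      q.subtypeEquiv fun a => Iff.rfl
    rw [Cardinal.mk_congr (e1.trans (e2.trans (sumLeftSubtype _ _))), hA]
  have hAV : A \ V = Subtype.val '' {a : ↥A | ¬ (q a).isLeft} := by
    ext x
    constructor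
    · rintro ⟨hxA, hxV⟩
      exact ⟨⟨x, hxA⟩, fun h => hxV ((hmemV x hxA).mpr h), rfl⟩
    · rintro ⟨a, ha, rfl⟩
      exact ⟨a.2, fun h => ha ((hmemV _ a.2).mp h)⟩
  have hAVcard : #↥(A \ V) = #Ω := by
    rw [hAV]
    have e1 : ↥(Subtype.val '' {a : ↥A | ¬ (q a).isLeft}) ≃ {a : ↥A | ¬ (q a).isLeft} :=
      (Equiv.Set.image _ _ Subtype.val_injective).symm
    have e2 : {a : ↥A | ¬ (q a).isLeft} ≃ {s : ↥A ⊕ ↥A // ¬ s.isLeft} :=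
      q.subtypeEquiv fun a => Iff.rfl
    have e3 : {s : ↥A ⊕ ↥A // ¬ s.isLeft} ≃ {s : ↥A ⊕ ↥A // s.isRight} :=
      Equiv.subtypeEquivRight fun s => by cases s <;> simp
    rw [Cardinal.mk_congr (e1.trans (e2.trans (e3.trans (sumRightSubtype _ _)))), hA]
  exact ⟨V, hVsub, hVcard, hAVcard⟩

lemma exists_subset_equiv (X T : Set Ω) (hle : #↥X ≤ #↥T) :
    ∃ P, P ⊆ T ∧ Nonempty (↥X ≃ ↥P) := by
  obtain ⟨f⟩ := (Cardinal.le_def _ _).mp hle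
  refine ⟨Subtype.val '' (Set.range f), ?_, ⟨?_⟩⟩
  · rintro x ⟨a, _, rfl⟩; exact a.2
  · exact (Equiv.ofInjective f f.injective).trans (Equiv.Set.image _ _ Subtype.val_injective)

end tools


section factor

variable {Ω : Type*} [Infinite Ω]

open scoped Classical

noncomputable def unionGlue {Γ : Type*} {A B C D : Set Γ} (dAB : Disjoint A B)
    (dCD : Disjoint C D) (e1 : ↥A ≃ ↥C) (e2 : ↥B ≃ ↥D) : ↥(A ∪ B) ≃ ↥(C ∪ D) :=
  letI := Classical.decPred (· ∈ A)
  letI := Classical.decPred (· ∈ C)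
  (Equiv.Set.union dAB).trans ((e1.sumCongr e2).trans (Equiv.Set.union dCD).symm)

lemma unionGlue_apply_left {Γ : Type*} {A B C D : Set Γ} (dAB : Disjoint A B)
    (dCD : Disjoint C D) (e1 : ↥A ≃ ↥C) (e2 : ↥B ≃ ↥D) {x : Γ} (hx : x ∈ A)
    (hxu : x ∈ A ∪ B) : (unionGlue dAB dCD e1 e2 ⟨x, hxu⟩ : Γ) = ↑(e1 ⟨x, hx⟩) := by
  letI := Classical.decPred (· ∈ A)
  letI := Classical.decPred (· ∈ C)
  have h1 : Equiv.Set.union dAB ⟨x, hxu⟩ = Sum.inl ⟨x, hx⟩ :=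
    Equiv.Set.union_apply_left dAB (a := ⟨x, hxu⟩) hx
  simp [unionGlue, h1]

lemma unionGlue_apply_right {Γ : Type*} {A B C D : Set Γ} (dAB : Disjoint A B)
    (dCD : Disjoint C D) (e1 : ↥A ≃ ↥C) (e2 : ↥B ≃ ↥D) {x : Γ} (hx : x ∈ B)
    (hxu : x ∈ A ∪ B) : (unionGlue dAB dCD e1 e2 ⟨x, hxu⟩ : Γ) = ↑(e2 ⟨x, hx⟩) := by
  letI := Classical.decPred (· ∈ A)
  letI := Classical.decPred (· ∈ C)
  have h1 : Equiv.Set.union dAB ⟨x, hxu⟩ = Sum.inr ⟨x, hx⟩ :=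
    Equiv.Set.union_apply_right dAB (a := ⟨x, hxu⟩) hx
  simp [unionGlue, h1]

noncomputable def unionGlueOfEq {Γ : Type*} {A B C D Z : Set Γ} (dAB : Disjoint A B)
    (dCD : Disjoint C D) (e1 : ↥A ≃ ↥C) (e2 : ↥B ≃ ↥D) (hZ : C ∪ D = Z) :
    ↥(A ∪ B) ≃ ↥Z :=
  (unionGlue dAB dCD e1 e2).trans (Equiv.setCongr hZ)

lemma unionGlueOfEq_apply_left {Γ : Type*} {A B C D Z : Set Γ} (dAB : Disjoint A B)
    (dCD : Disjoint C D) (e1 : ↥A ≃ ↥C) (e2 : ↥B ≃ ↥D) (hZ : C ∪ D = Z) {x : Γ}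
    (hx : x ∈ A) (hxu : x ∈ A ∪ B) :
    (unionGlueOfEq dAB dCD e1 e2 hZ ⟨x, hxu⟩ : Γ) = ↑(e1 ⟨x, hx⟩) := by
  show (Equiv.setCongr hZ (unionGlue dAB dCD e1 e2 ⟨x, hxu⟩) : Γ) = _
  rw [show ∀ y : ↥(C ∪ D), (Equiv.setCongr hZ y : Γ) = ↑y from fun y => rfl]
  exact unionGlue_apply_left dAB dCD e1 e2 hx hxu

lemma unionGlueOfEq_apply_right {Γ : Type*} {A B C D Z : Set Γ} (dAB : Disjoint A B)
    (dCD : Disjoint C D) (e1 : ↥A ≃ ↥C) (e2 : ↥B ≃ ↥D) (hZ : C ∪ D = Z) {x : Γ}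
    (hx : x ∈ B) (hxu : x ∈ A ∪ B) :
    (unionGlueOfEq dAB dCD e1 e2 hZ ⟨x, hxu⟩ : Γ) = ↑(e2 ⟨x, hx⟩) := by
  show (Equiv.setCongr hZ (unionGlue dAB dCD e1 e2 ⟨x, hxu⟩) : Γ) = _
  rw [show ∀ y : ↥(C ∪ D), (Equiv.setCongr hZ y : Γ) = ↑y from fun y => rfl]
  exact unionGlue_apply_right dAB dCD e1 e2 hx hxu

theorem four_factor (Z0 Z1 Z2 : Set Ω)
    (d01 : Disjoint Z0 Z1) (d02 : Disjoint Z0 Z2) (d12 : Disjoint Z1 Z2)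
    (hcover : Z0 ∪ Z1 ∪ Z2 = Set.univ)
    (k0 : #↥Z0 = #Ω) (k1 : #↥Z1 = #Ω) (k2 : #↥Z2 = #Ω)
    (g : Equiv.Perm Ω) :
    ∃ β σ τ ρ : Equiv.Perm Ω,
      (∀ x ∈ Z2, β x = x) ∧ (∀ x ∈ Z0, σ x = x) ∧
      (∀ x ∈ Z2, τ x = x) ∧ (∀ x ∈ Z0, ρ x = x) ∧ g = β * σ * τ * ρ := by
  set M2 := Z0 ∪ Z1 with hM2def
  set M0 := Z1 ∪ Z2 with hM0def
  -- membership helpers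
  have hmem0 : ∀ x : Ω, x ∉ Z0 ↔ x ∈ M0 := by
    intro x
    constructor
    · intro h
      have hx : x ∈ Z0 ∪ Z1 ∪ Z2 := by rw [hcover]; trivial
      rcases hx with (h0 | h1) | h2
      exacts [absurd h0 h, Or.inl h1, Or.inr h2]
    · rintro (h1 | h2) h0
      exacts [disjoint_left.mp d01 h0 h1, disjoint_left.mp d02 h0 h2]
  have hmem2 : ∀ x : Ω, x ∉ Z2 ↔ x ∈ M2 := by
    intro x
    constructor
    · intro h
      have hx : x ∈ Z0 ∪ Z1 ∪ Z2 := by rw [hcover]; trivial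
      rcases hx with (h0 | h1) | h2
      exacts [Or.inl h0, Or.inr h1, absurd h2 h]
    · rintro (h0 | h1) h2
      exacts [disjoint_left.mp d02 h0 h2, disjoint_left.mp d12 h1 h2]
  have hM2card : #↥M2 = #Ω := mk_eq_top_of_subset subset_union_left k0
  -- trichotomy and choice of V
  have hM2cov : M2 ⊆ (M2 ∩ ⇑g '' Z0) ∪ ((M2 ∩ ⇑g '' Z1) ∪ (M2 ∩ ⇑g '' Z2)) := by
    intro y hy
    have hx : g.symm y ∈ Z0 ∪ Z1 ∪ Z2 := by rw [hcover]; trivial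
    have him : ∀ {Z : Set Ω}, g.symm y ∈ Z → y ∈ ⇑g '' Z := fun h =>
      ⟨g.symm y, h, by simp⟩
    rcases hx with (h0 | h1) | h2
    · exact Or.inl ⟨hy, him h0⟩
    · exact Or.inr (Or.inl ⟨hy, him h1⟩)
    · exact Or.inr (Or.inr ⟨hy, him h2⟩)
  have tri : #↥(M2 ∩ ⇑g '' Z0) = #Ω ∨ #↥(M2 ∩ ⇑g '' Z1) = #Ω ∨ #↥(M2 ∩ ⇑g '' Z2) = #Ω := by
    by_contra hcon
    push_neg at hcon
    obtain ⟨hA, hB, hC⟩ := hcon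
    have lt : ∀ {S : Set Ω}, #↥S ≠ #Ω → #↥S < #Ω := fun h => lt_of_le_of_ne (mk_set_le' _) h
    have hlt : #↥M2 < #Ω := by
      calc #↥M2 ≤ #↥((M2 ∩ ⇑g '' Z0) ∪ ((M2 ∩ ⇑g '' Z1) ∪ (M2 ∩ ⇑g '' Z2))) :=
            Cardinal.mk_le_mk_of_subset hM2cov
        _ ≤ #↥(M2 ∩ ⇑g '' Z0) + #↥((M2 ∩ ⇑g '' Z1) ∪ (M2 ∩ ⇑g '' Z2)) :=
            Cardinal.mk_union_le _ _
        _ ≤ #↥(M2 ∩ ⇑g '' Z0) + (#↥(M2 ∩ ⇑g '' Z1) + #↥(M2 ∩ ⇑g '' Z2)) :=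
            add_le_add le_rfl (Cardinal.mk_union_le _ _)
        _ < #Ω := Cardinal.add_lt_of_lt (Cardinal.aleph0_le_mk Ω) (lt hA)
            (Cardinal.add_lt_of_lt (Cardinal.aleph0_le_mk Ω) (lt hB) (lt hC))
    rw [hM2card] at hlt
    exact lt_irrefl _ hlt
  have hVex : ∃ V, V ⊆ M2 ∧ #↥V = #Ω ∧ #↥(M2 \ V) = #Ω ∧ #↥(M0 \ ⇑g ⁻¹' V) = #Ω := by
    have main : ∀ (Zi T : Set Ω), T ⊆ M0 → Disjoint T Zi → #↥T = #Ω →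
        #↥(M2 ∩ ⇑g '' Zi) = #Ω →
        ∃ V, V ⊆ M2 ∧ #↥V = #Ω ∧ #↥(M2 \ V) = #Ω ∧ #↥(M0 \ ⇑g ⁻¹' V) = #Ω := by
      intro Zi T hTM0 hTZi hT hcard
      obtain ⟨V, hVsub, hVcard, hVdiff⟩ := split_set _ hcard
      have hVM2 : V ⊆ M2 := hVsub.trans inter_subset_left
      have hM2V : #↥(M2 \ V) = #Ω :=
        mk_eq_top_of_subset (diff_subset_diff_left inter_subset_left) hVdiff
      have hpre : ⇑g ⁻¹' V ⊆ Zi := by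
        intro x hx
        obtain ⟨z, hz, hgz⟩ := (hVsub hx).2
        rwa [← g.injective hgz]
      have hsub : T ⊆ M0 \ ⇑g ⁻¹' V := fun x hx =>
        ⟨hTM0 hx, fun hpx => (disjoint_left.mp hTZi hx) (hpre hpx)⟩
      exact ⟨V, hVM2, hVcard, hM2V, mk_eq_top_of_subset hsub hT⟩
    rcases tri with h | h | h
    · exact main Z0 Z1 subset_union_left d01.symm k1 h
    · exact main Z1 Z2 subset_union_right d12.symm k2 h
    · exact main Z2 Z1 subset_union_left d12 k1 h
  obtain ⟨V, hVM2, hVcard, hM2V, hM0V⟩ := hVex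
  -- β
  have dM2Z2 : Disjoint M2 Z2 := disjoint_union_left.mpr ⟨d02, d12⟩
  have dV2 : Disjoint V Z2 := disjoint_of_subset_left hVM2 dM2Z2
  obtain ⟨eZV⟩ : Nonempty (↥Z0 ≃ ↥V) := Cardinal.eq.mp (k0.trans hVcard.symm)
  have hcompl02 : ((Z0 ∪ Z2)ᶜ : Set Ω) = Z1 := by
    ext x
    simp only [mem_compl_iff, mem_union]
    constructor
    · intro h
      push_neg at h
      have hx : x ∈ M0 := (hmem0 x).mp h.1
      rcases hx with h1 | h2
      exacts [h1, absurd h2 h.2]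
    · intro h1
      push_neg
      exact ⟨fun h0 => disjoint_left.mp d01 h0 h1, fun h2 => disjoint_left.mp d12 h1 h2⟩
  have hcomplV2 : ((V ∪ Z2)ᶜ : Set Ω) = M2 \ V := by
    ext x
    simp only [mem_compl_iff, mem_union, mem_diff]
    constructor
    · intro h
      push_neg at h
      exact ⟨(hmem2 x).mp h.2, h.1⟩
    · rintro ⟨hm, hv⟩
      push_neg
      exact ⟨hv, fun h2 => disjoint_left.mp dM2Z2 hm h2⟩
  obtain ⟨ec⟩ : Nonempty (↥((Z0 ∪ Z2)ᶜ) ≃ ↥((V ∪ Z2)ᶜ)) := by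
    refine Cardinal.eq.mp ?_
    rw [hcompl02, hcomplV2, k1, hM2V]
  set eβ : ↥(Z0 ∪ Z2) ≃ ↥(V ∪ Z2) := unionGlue d02 dV2 eZV (Equiv.refl ↥Z2) with heβ
  set β := extPerm (Z0 ∪ Z2) (V ∪ Z2) eβ ec with hβ
  have hβZ2 : ∀ x ∈ Z2, β x = x := by
    intro x hx
    have hxA : x ∈ Z0 ∪ Z2 := Or.inr hx
    rw [hβ, extPerm_apply_mem _ _ _ _ hxA]
    exact unionGlue_apply_right d02 dV2 eZV (Equiv.refl ↥Z2) hx hxA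
  have hβZ0 : ∀ (x : Ω) (hx : x ∈ Z0), β x = ↑(eZV ⟨x, hx⟩) := by
    intro x hx
    have hxA : x ∈ Z0 ∪ Z2 := Or.inl hx
    rw [hβ, extPerm_apply_mem _ _ _ _ hxA]
    exact unionGlue_apply_left d02 dV2 eZV (Equiv.refl ↥Z2) hx hxA
  have hβimg : ⇑β '' Z0 = V := by
    apply subset_antisymm
    · rintro y ⟨x, hx, rfl⟩
      rw [hβZ0 x hx]
      exact (eZV ⟨x, hx⟩).2
    · intro v hv
      refine ⟨↑(eZV.symm ⟨v, hv⟩), (eZV.symm ⟨v, hv⟩).2, ?_⟩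
      rw [hβZ0 _ (eZV.symm ⟨v, hv⟩).2]
      simp
  -- g'
  set g' : Equiv.Perm Ω := β⁻¹ * g with hg'def
  have hg'pre : ⇑g' ⁻¹' Z0 = ⇑g ⁻¹' V := by
    ext x
    simp only [mem_preimage, hg'def, Equiv.Perm.mul_apply]
    constructor
    · intro h
      have hmem : β (β⁻¹ (g x)) ∈ ⇑β '' Z0 := mem_image_of_mem _ h
      rwa [show β (β⁻¹ (g x)) = g x from by simp, hβimg] at hmem
    · intro h
      rw [← hβimg] at h
      obtain ⟨z, hz, hzeq⟩ := h
      have hz' : z = β⁻¹ (g x) := by rw [← hzeq]; simp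
      rwa [← hz']
  -- ρ
  set X : Set Ω := M0 ∩ ⇑g' ⁻¹' Z0 with hXdef
  have hM0X : M0 \ X = M0 \ ⇑g ⁻¹' V := by
    ext x
    simp only [hXdef, mem_diff, mem_inter_iff, hg'pre]
    tauto
  obtain ⟨Z1a, hZ1a, hZ1acard, hZ1adiff⟩ := split_set Z1 k1
  obtain ⟨P, hPZ1a, ⟨eXP⟩⟩ := exists_subset_equiv X Z1a (by rw [hZ1acard]; exact mk_set_le' X)
  have hPZ1 : P ⊆ Z1 := hPZ1a.trans hZ1a
  have dM0Z0 : Disjoint M0 Z0 := disjoint_union_left.mpr ⟨d01.symm, d02.symm⟩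
  have dXZ0 : Disjoint X Z0 := disjoint_of_subset_left inter_subset_left dM0Z0
  have dPZ0 : Disjoint P Z0 := disjoint_of_subset_left hPZ1 d01.symm
  have hcomplXZ0 : ((X ∪ Z0)ᶜ : Set Ω) = M0 \ X := by
    ext x
    simp only [mem_compl_iff, mem_union, mem_diff]
    constructor
    · intro h
      push_neg at h
      exact ⟨(hmem0 x).mp h.2, h.1⟩
    · rintro ⟨hm, hx⟩
      push_neg
      exact ⟨hx, fun h0 => disjoint_left.mp dM0Z0 hm h0⟩
  have hcomplPZ0 : ((P ∪ Z0)ᶜ : Set Ω) = M0 \ P := by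
    ext x
    simp only [mem_compl_iff, mem_union, mem_diff]
    constructor
    · intro h
      push_neg at h
      exact ⟨(hmem0 x).mp h.2, h.1⟩
    · rintro ⟨hm, hx⟩
      push_neg
      exact ⟨hx, fun h0 => disjoint_left.mp dM0Z0 hm h0⟩
  have hM0P : #↥(M0 \ P) = #Ω := by
    refine mk_eq_top_of_subset (fun x hx => ⟨Or.inr hx, ?_⟩) k2
    intro hP
    exact disjoint_left.mp d12 (hPZ1 hP) hx
  obtain ⟨ecρ⟩ : Nonempty (↥((X ∪ Z0)ᶜ) ≃ ↥((P ∪ Z0)ᶜ)) := by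
    refine Cardinal.eq.mp ?_
    rw [hcomplXZ0, hcomplPZ0, hM0X, hM0V, hM0P]
  set eρ : ↥(X ∪ Z0) ≃ ↥(P ∪ Z0) := unionGlue dXZ0 dPZ0 eXP (Equiv.refl ↥Z0) with heρ
  set ρ := extPerm (X ∪ Z0) (P ∪ Z0) eρ ecρ with hρ
  have hρZ0 : ∀ x ∈ Z0, ρ x = x := by
    intro x hx
    have hxA : x ∈ X ∪ Z0 := Or.inr hx
    rw [hρ, extPerm_apply_mem _ _ _ _ hxA, heρ]
    exact unionGlue_apply_right dXZ0 dPZ0 eXP (Equiv.refl ↥Z0) hx hxA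
  have hρX : ∀ (x : Ω) (hx : x ∈ X), ρ x = ↑(eXP ⟨x, hx⟩) := by
    intro x hx
    have hxA : x ∈ X ∪ Z0 := Or.inl hx
    rw [hρ, extPerm_apply_mem _ _ _ _ hxA, heρ]
    exact unionGlue_apply_left dXZ0 dPZ0 eXP (Equiv.refl ↥Z0) hx hxA
  -- τ
  set A1 : Set Ω := Z0 ∩ ⇑g' ⁻¹' Z0 with hA1def
  have hA1X : A1 ∪ X = ⇑g' ⁻¹' Z0 := by
    ext x
    simp only [hA1def, hXdef, mem_union, mem_inter_iff]
    constructor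
    · rintro (⟨_, h⟩ | ⟨_, h⟩) <;> exact h
    · intro h
      by_cases h0 : x ∈ Z0
      · exact Or.inl ⟨h0, h⟩
      · exact Or.inr ⟨(hmem0 x).mp h0, h⟩
  have dA1X : Disjoint A1 X :=
    disjoint_of_subset inter_subset_left inter_subset_left dM0Z0.symm
  have dA1P : Disjoint A1 P :=
    disjoint_of_subset_left inter_subset_left (disjoint_of_subset_right hPZ1 d01)
  set B1 : Set Ω := ⇑g' '' A1 with hB1def
  set B2 : Set Ω := ⇑g' '' X with hB2def
  have hB12 : B1 ∪ B2 = Z0 := by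
    rw [hB1def, hB2def, ← image_union, hA1X, Set.image_preimage_eq _ g'.surjective]
  have dB12 : Disjoint B1 B2 := by
    rw [hB1def, hB2def, Set.disjoint_image_iff g'.injective]
    exact dA1X
  set e'1 : ↥A1 ≃ ↥B1 := Equiv.Set.image _ A1 g'.injective with he'1
  set e'2 : ↥X ≃ ↥B2 := Equiv.Set.image _ X g'.injective with he'2
  set eτcore : ↥(A1 ∪ P) ≃ ↥Z0 :=
    unionGlueOfEq dA1P dB12 e'1 (eXP.symm.trans e'2) hB12 with heτcore
  have dAP2 : Disjoint (A1 ∪ P) Z2 :=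
    disjoint_union_left.mpr ⟨disjoint_of_subset_left inter_subset_left d02,
      disjoint_of_subset_left hPZ1 d12⟩
  set eτ : ↥((A1 ∪ P) ∪ Z2) ≃ ↥(Z0 ∪ Z2) :=
    unionGlue dAP2 d02 eτcore (Equiv.refl ↥Z2) with heτ
  have hsub1 : Z1 \ Z1a ⊆ (((A1 ∪ P) ∪ Z2)ᶜ : Set Ω) := by
    rintro x ⟨h1, hna⟩
    simp only [mem_compl_iff, mem_union]
    push_neg
    refine ⟨⟨?_, ?_⟩, ?_⟩
    · intro hA1x
      exact disjoint_left.mp d01 (inter_subset_left hA1x) h1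
    · intro hPx
      exact hna (hPZ1a hPx)
    · intro h2
      exact disjoint_left.mp d12 h1 h2
  have hc1 : #↥((((A1 ∪ P) ∪ Z2)ᶜ : Set Ω)) = #Ω := mk_eq_top_of_subset hsub1 hZ1adiff
  have hc2 : #↥(((Z0 ∪ Z2)ᶜ : Set Ω)) = #Ω := by rw [hcompl02]; exact k1
  obtain ⟨ecτ⟩ : Nonempty (↥(((A1 ∪ P) ∪ Z2)ᶜ) ≃ ↥(((Z0 ∪ Z2)ᶜ : Set Ω))) :=
    Cardinal.eq.mp (hc1.trans hc2.symm)
  set τ := extPerm ((A1 ∪ P) ∪ Z2) (Z0 ∪ Z2) eτ ecτ with hτ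
  have hτZ2 : ∀ x ∈ Z2, τ x = x := by
    intro x hx
    have hxA : x ∈ (A1 ∪ P) ∪ Z2 := Or.inr hx
    rw [hτ, extPerm_apply_mem _ _ _ _ hxA, heτ]
    exact unionGlue_apply_right dAP2 d02 eτcore (Equiv.refl ↥Z2) hx hxA
  have hτcoreval : ∀ (x : Ω) (hx : x ∈ A1 ∪ P), τ x = ↑(eτcore ⟨x, hx⟩) := by
    intro x hx
    have hxA : x ∈ (A1 ∪ P) ∪ Z2 := Or.inl hx
    rw [hτ, extPerm_apply_mem _ _ _ _ hxA, heτ]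
    exact unionGlue_apply_left dAP2 d02 eτcore (Equiv.refl ↥Z2) hx hxA
  have hτA1 : ∀ (x : Ω) (hx : x ∈ A1), τ x = g' x := by
    intro x hx
    rw [hτcoreval x (Or.inl hx), heτcore]
    have h := unionGlueOfEq_apply_left dA1P dB12 e'1 (eXP.symm.trans e'2) hB12 hx (Or.inl hx)
    exact h.trans rfl
  have hτP : ∀ (x : Ω) (hx : x ∈ X), τ (ρ x) = g' x := by
    intro x hx
    have hPmem : (↑(eXP ⟨x, hx⟩) : Ω) ∈ P := (eXP ⟨x, hx⟩).2
    rw [hρX x hx, hτcoreval _ (Or.inr hPmem), heτcore]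
    have h := unionGlueOfEq_apply_right dA1P dB12 e'1 (eXP.symm.trans e'2) hB12 hPmem
      (Or.inr hPmem)
    refine h.trans ?_
    have h2 : eXP.symm ⟨↑(eXP ⟨x, hx⟩), hPmem⟩ = ⟨x, hx⟩ := by
      rw [show (⟨↑(eXP ⟨x, hx⟩), hPmem⟩ : ↥P) = eXP ⟨x, hx⟩ from Subtype.ext rfl]
      simp
    show (↑(e'2 (eXP.symm ⟨↑(eXP ⟨x, hx⟩), hPmem⟩)) : Ω) = g' x
    rw [h2]
    rfl
  have hτpre : ∀ (z : Ω), z ∈ Z0 → τ.symm z ∈ A1 ∪ P := by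
    intro z hz
    by_contra hcon
    rcases em (τ.symm z ∈ (A1 ∪ P) ∪ Z2) with hA | hA
    · have h2 : τ.symm z ∈ Z2 := by
        rcases hA with h | h
        exacts [absurd h hcon, h]
      have h3 : τ (τ.symm z) = τ.symm z := hτZ2 _ h2
      have h4 : τ (τ.symm z) = z := Equiv.apply_symm_apply τ z
      have h5 : z = τ.symm z := h4.symm.trans h3
      rw [h5] at hz
      exact disjoint_left.mp d02 hz h2
    · have hval : τ (τ.symm z) = ↑(ecτ ⟨τ.symm z, hA⟩) :=
        extPerm_apply_notmem _ _ _ _ hA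
      rw [Equiv.apply_symm_apply] at hval
      have hz1 : z ∈ ((Z0 ∪ Z2)ᶜ : Set Ω) := by
        rw [hval]
        exact (ecτ ⟨τ.symm z, hA⟩).2
      exact hz1 (Or.inl hz)
  -- σ
  set σ : Equiv.Perm Ω := g' * ρ⁻¹ * τ⁻¹ with hσdef
  have hσZ0 : ∀ z ∈ Z0, σ z = z := by
    intro z hz
    have hs := hτpre z hz
    have hτinv : (τ⁻¹ : Equiv.Perm Ω) z = τ.symm z := rfl
    rcases hs with hsa | hsp
    · -- τ.symm z ∈ A1
      have hρfix : ρ (τ.symm z) = τ.symm z := hρZ0 _ (inter_subset_left hsa)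
      have : ρ⁻¹ (τ.symm z) = τ.symm z := by
        conv_lhs => rw [← hρfix]
        simp
      rw [hσdef]
      simp only [Equiv.Perm.mul_apply, hτinv, this]
      have := hτA1 _ hsa
      rw [← this, Equiv.apply_symm_apply]
    · -- τ.symm z ∈ P
      set x0 : Ω := ↑(eXP.symm ⟨τ.symm z, hsp⟩) with hx0
      have hx0X : x0 ∈ X := (eXP.symm ⟨τ.symm z, hsp⟩).2
      have hρx0 : ρ x0 = τ.symm z := by
        rw [hρX x0 hx0X]
        have h6 : (⟨x0, hx0X⟩ : ↥X) = eXP.symm ⟨τ.symm z, hsp⟩ := Subtype.ext hx0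
        rw [h6, Equiv.apply_symm_apply]
      have hinv : ρ⁻¹ (τ.symm z) = x0 := by
        rw [← hρx0]
        simp
      rw [hσdef]
      simp only [Equiv.Perm.mul_apply, hτinv, hinv]
      have h2 := hτP x0 hx0X
      rw [hρx0] at h2
      rw [← h2, Equiv.apply_symm_apply]
  refine ⟨β, σ, τ, ρ, hβZ2, hσZ0, hτZ2, hρZ0, ?_⟩
  rw [hσdef, hg'def]
  group

end factor


section countability

lemma perm_uncountable {Ω : Type*} [Infinite Ω] : ¬ Countable (Equiv.Perm Ω) := by
  intro h
  have h1 : #(Equiv.Perm Ω) ≤ ℵ₀ := Cardinal.mk_le_aleph0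
  rw [Cardinal.mk_perm_eq_two_power] at h1
  have h2 : #Ω < 2 ^ #Ω := Cardinal.cantor _
  have h4 : ℵ₀ ≤ #Ω := Cardinal.aleph0_le_mk Ω
  exact absurd (h2.trans_le (h1.trans h4)) (lt_irrefl _)

lemma closure_set_countable {G : Type*} [Group G] (C : Set G) (hC : C.Countable) :
    ((Subgroup.closure C : Subgroup G) : Set G).Countable := by
  classical
  set Q : Set G := C ∪ (Inv.inv '' C) with hQ
  have hQc : Q.Countable := hC.union (hC.image _)
  haveI := hQc.to_subtype
  have hQinv : ∀ q : G, q ∈ Q → q⁻¹ ∈ Q := by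
    rintro q (hq | ⟨y, hy, rfl⟩)
    · exact Or.inr ⟨q, hq, rfl⟩
    · show (y⁻¹)⁻¹ ∈ Q; rw [inv_inv]; exact Or.inl hy
  have key : ∀ x ∈ Subgroup.closure C,
      x ∈ Set.range (fun l : List ↥Q => (l.map Subtype.val).prod) := by
    intro x hx
    induction hx using Subgroup.closure_induction with
    | mem y hy => exact ⟨[⟨y, Or.inl hy⟩], by simp⟩
    | one => exact ⟨[], by simp⟩
    | mul y z hy hz ihy ihz =>
        obtain ⟨ly, hly⟩ := ihy
        obtain ⟨lz, hlz⟩ := ihz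
        exact ⟨ly ++ lz, by simp [← hly, ← hlz]⟩
    | inv y hy ihy =>
        obtain ⟨ly, hly⟩ := ihy
        have hly' : (ly.map Subtype.val).prod = y := hly
        refine ⟨(ly.map (fun q : ↥Q => (⟨(q : G)⁻¹, hQinv _ q.2⟩ : ↥Q))).reverse, ?_⟩
        show (((ly.map (fun q : ↥Q => (⟨(q : G)⁻¹, hQinv _ q.2⟩ : ↥Q))).reverse).map
          Subtype.val).prod = y⁻¹
        have h1 : ((ly.map (fun q : ↥Q => (⟨(q : G)⁻¹, hQinv _ q.2⟩ : ↥Q))).reverse).map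
            Subtype.val = ((ly.map Subtype.val).map (fun x => x⁻¹)).reverse := by
          simp only [List.map_reverse, List.map_map]
          rfl
        rw [h1, ← List.prod_inv_reverse, hly']
  exact (Set.countable_range _).mono fun x hx => key x hx

lemma mem_closure_finite {G : Type*} [Group G] {S : Set G} {x : G}
    (hx : x ∈ Subgroup.closure S) :
    ∃ T : Set G, T ⊆ S ∧ T.Finite ∧ x ∈ Subgroup.closure T := by
  induction hx using Subgroup.closure_induction with
  | mem y hy => exact ⟨{y}, by simpa, Set.finite_singleton y, Subgroup.subset_closure rfl⟩
  | one => exact ⟨∅, by simp, Set.finite_empty, one_mem _⟩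
  | mul y z hy hz ihy ihz =>
      obtain ⟨Ty, hys, hyf, hym⟩ := ihy
      obtain ⟨Tz, hzs, hzf, hzm⟩ := ihz
      exact ⟨Ty ∪ Tz, Set.union_subset hys hzs, hyf.union hzf,
        mul_mem (Subgroup.closure_mono Set.subset_union_left hym)
          (Subgroup.closure_mono Set.subset_union_right hzm)⟩
  | inv y hy ihy =>
      obtain ⟨Ty, hys, hyf, hym⟩ := ihy
      exact ⟨Ty, hys, hyf, inv_mem hym⟩

lemma finite_support_set {G : Type*} [Group G] {S : Set G} (hS : Subgroup.closure S = ⊤)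
    {F : Set G} (hF : F.Finite) :
    ∃ T : Set G, T ⊆ S ∧ T.Finite ∧ F ⊆ ↑(Subgroup.closure T) := by
  have h := fun (x : ↥F) =>
    mem_closure_finite (show (x : G) ∈ Subgroup.closure S by rw [hS]; trivial)
  choose Tf hTfS hTff hTfm using h
  haveI := hF.to_subtype
  refine ⟨⋃ x : ↥F, Tf x, Set.iUnion_subset hTfS, Set.finite_iUnion hTff, ?_⟩
  intro a haF
  exact Subgroup.closure_mono (Set.subset_iUnion Tf ⟨a, haF⟩) (hTfm ⟨a, haF⟩)

end countability

section main

theorem main_theorem {Ω : Type*} [Infinite Ω]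
    (S : Set (Equiv.Perm Ω)) (hS : Subgroup.closure S = ⊤) :
    ∃ T ⊂ S, Subgroup.closure T = ⊤ := by
  classical
  -- S is infinite
  have hSinf : S.Infinite := by
    by_contra hfin
    rw [Set.not_infinite] at hfin
    have hcnt := closure_set_countable S hfin.countable
    rw [hS] at hcnt
    have huniv : (Set.univ : Set (Equiv.Perm Ω)).Countable := by
      simpa using hcnt
    exact perm_uncountable (Set.countable_univ_iff.mp huniv)
  set emb : ℕ ↪ ↥S := Set.Infinite.natEmbedding S hSinf with hembdef
  set s : ℕ → Equiv.Perm Ω := fun n => ↑(emb n) with hsdef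
  have hsS : ∀ n, s n ∈ S := fun n => (emb n).2
  have hsinj : Function.Injective s :=
    fun a b h => emb.injective (Subtype.ext h)
  -- partition Ω into three pieces of full cardinality
  obtain ⟨Z0, _, k0, hrest⟩ :=
    split_set (Set.univ : Set Ω) (by rw [Cardinal.mk_univ])
  obtain ⟨Z1, hZ1sub, k1, hrest2⟩ := split_set (Set.univ \ Z0) hrest
  set Z2 : Set Ω := (Set.univ \ Z0) \ Z1 with hZ2def
  have k2 : #↥Z2 = #Ω := hrest2
  have d01 : Disjoint Z0 Z1 := by
    rw [Set.disjoint_left]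
    intro x hx0 hx1
    exact (hZ1sub hx1).2 hx0
  have d02 : Disjoint Z0 Z2 := by
    rw [Set.disjoint_left]
    intro x hx0 hx2
    exact hx2.1.2 hx0
  have d12 : Disjoint Z1 Z2 := by
    rw [Set.disjoint_left]
    intro x hx1 hx2
    exact hx2.2 hx1
  have hcover : Z0 ∪ Z1 ∪ Z2 = Set.univ := by
    ext x
    simp only [Set.mem_union, Set.mem_univ, iff_true, hZ2def, Set.mem_diff]
    by_cases h0 : x ∈ Z0
    · exact Or.inl (Or.inl h0)
    · by_cases h1 : x ∈ Z1
      · exact Or.inl (Or.inr h1)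
      · exact Or.inr ⟨⟨trivial, h0⟩, h1⟩
  -- factor each s n
  have hfac := fun n => four_factor Z0 Z1 Z2 d01 d02 d12 hcover k0 k1 k2 (s n)
  choose fβ fσ fτ fρ hβ2 hσ0 hτ2 hρ0 heq using hfac
  -- wands
  have hZ0c : #↥(Z0ᶜ) = #Ω := by
    refine mk_eq_top_of_subset (show Z1 ⊆ Z0ᶜ from ?_) k1
    intro x hx1 hx0
    exact Set.disjoint_left.mp d01 hx0 hx1
  have hZ2c : #↥(Z2ᶜ) = #Ω := by
    refine mk_eq_top_of_subset (show Z0 ⊆ Z2ᶜ from ?_) k0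
    intro x hx0 hx2
    exact Set.disjoint_left.mp d02 hx0 hx2
  obtain ⟨a1, a2, a3, a4, hwβ⟩ := wand Z2 k2 hZ2c fβ hβ2
  obtain ⟨b1, b2, b3, b4, hwτ⟩ := wand Z2 k2 hZ2c fτ hτ2
  obtain ⟨c1, c2, c3, c4, hwσ⟩ := wand Z0 k0 hZ0c fσ hσ0
  obtain ⟨e1, e2, e3, e4, hwρ⟩ := wand Z0 k0 hZ0c fρ hρ0
  set F : Set (Equiv.Perm Ω) :=
    {a1, a2, a3, a4} ∪ {b1, b2, b3, b4} ∪ {c1, c2, c3, c4} ∪ {e1, e2, e3, e4} with hFdef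
  have hFfin : F.Finite := by
    apply Set.Finite.union
    apply Set.Finite.union
    apply Set.Finite.union
    all_goals
      apply Set.Finite.insert
      apply Set.Finite.insert
      apply Set.Finite.insert
      exact Set.finite_singleton _
  have hsubβ : ({a1, a2, a3, a4} : Set (Equiv.Perm Ω)) ⊆ F := by
    intro x hx; exact Or.inl (Or.inl (Or.inl hx))
  have hsubτ : ({b1, b2, b3, b4} : Set (Equiv.Perm Ω)) ⊆ F := by
    intro x hx; exact Or.inl (Or.inl (Or.inr hx))
  have hsubσ : ({c1, c2, c3, c4} : Set (Equiv.Perm Ω)) ⊆ F := by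
    intro x hx; exact Or.inl (Or.inr hx)
  have hsubρ : ({e1, e2, e3, e4} : Set (Equiv.Perm Ω)) ⊆ F := by
    intro x hx; exact Or.inr hx
  have hsF : ∀ n, s n ∈ Subgroup.closure F := by
    intro n
    rw [heq n]
    exact mul_mem (mul_mem (mul_mem
      (Subgroup.closure_mono hsubβ (hwβ n))
      (Subgroup.closure_mono hsubσ (hwσ n)))
      (Subgroup.closure_mono hsubτ (hwτ n)))
      (Subgroup.closure_mono hsubρ (hwρ n))
  -- finite subset of S generating F
  obtain ⟨T', hT'S, hT'fin, hFT'⟩ := finite_support_set hS hFfin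
  -- pick an index avoiding T'
  have hpre : (s ⁻¹' T').Finite := hT'fin.preimage hsinj.injOn
  obtain ⟨n, hn⟩ := (hpre.infinite_compl).nonempty
  have hsnT' : s n ∉ T' := hn
  refine ⟨S \ {s n}, ?_, ?_⟩
  · constructor
    · exact Set.diff_subset
    · intro habs
      have := habs (hsS n)
      simp at this
  · -- closure (S \ {s n}) = ⊤
    have hT'T : T' ⊆ S \ {s n} := by
      intro x hx
      refine ⟨hT'S hx, ?_⟩
      simp only [Set.mem_singleton_iff]
      intro hxe
      rw [hxe] at hx
      exact hsnT' hx
    have hFclos : F ⊆ ↑(Subgroup.closure (S \ {s n})) :=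
      hFT'.trans (Subgroup.closure_mono hT'T)
    have hsn : s n ∈ Subgroup.closure (S \ {s n}) :=
      (Subgroup.closure_le _).mpr hFclos (hsF n)
    rw [eq_top_iff, ← hS]
    rw [Subgroup.closure_le]
    intro y hy
    by_cases hye : y = s n
    · rw [hye]; exact hsn
    · exact Subgroup.subset_closure ⟨hy, hye⟩

end main

end NMGS


theorem no_minimal_generating_set {Ω : Type*} [Infinite Ω]
    (S : Set (Equiv.Perm Ω)) (hS : Subgroup.closure S = ⊤) :
    ∃ T ⊂ S, Subgroup.closure T = ⊤ :=
  NMGS.main_theorem S hS
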